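/- Let F : CohI^n → CohI be a normal functor. The map sending a clique c ⊑ Tr(F) to the family c_{X⃗} = { F(ι₁,…,ιₙ)(y) | ⟨Y⃗⟩y ∈ c, and ι_i : Y_i ↪ X_i are embeddings } is a bijection from the set of cliques of the trace Tr(F) to the set of uniform families of cliques of F. -/

import Mathlib

open CategoryTheory Limits

/-- A coherence space: a web together with a reflexive symmetric coherence relation. -/
structure CohSpace : Type 1 where
  web : Type
  coh : web → web → Prop
  refl : ∀ x, coh x x
  symm : ∀ {x y}, coh x y → coh y x

/-- An embedding of coherence spaces: an injection preserving and reflecting coherence. -/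
@[ext]
structure CohEmb (X Y : CohSpace) : Type where
  toFun : X.web → Y.web
  inj : Function.Injective toFun
  coh_iff : ∀ x x', X.coh x x' ↔ Y.coh (toFun x) (toFun x')

/-- The category `CohI` of coherence spaces and embeddings. -/
instance : Category CohSpace where
  Hom := CohEmb
  id X := ⟨id, fun _ _ h => h, fun _ _ => Iff.rfl⟩
  comp f g := ⟨g.toFun ∘ f.toFun, g.inj.comp f.inj,
    fun x x' => (f.coh_iff x x').trans (g.coh_iff _ _)⟩
  id_comp _ := rfl
  comp_id _ := rfl
  assoc _ _ _ := rfl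

/-- A clique: a set of pairwise coherent points. -/
def CohSpace.IsClique (X : CohSpace) (c : Set X.web) : Prop :=
  ∀ ⦃x⦄, x ∈ c → ∀ ⦃y⦄, y ∈ c → X.coh x y

/-- Linear negation (dual) of a coherence space. -/
def CohSpace.dual (X : CohSpace) : CohSpace where
  web := X.web
  coh x y := x = y ∨ ¬ X.coh x y
  refl _ := Or.inl rfl
  symm h := h.elim (fun h' => Or.inl h'.symm) (fun h' => Or.inr fun hc => h' (X.symm hc))

/-- Tensor product of coherence spaces. -/
def CohSpace.tens (X Y : CohSpace) : CohSpace where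
  web := X.web × Y.web
  coh p q := X.coh p.1 q.1 ∧ Y.coh p.2 q.2
  refl p := ⟨X.refl p.1, Y.refl p.2⟩
  symm h := ⟨X.symm h.1, Y.symm h.2⟩

/-- Direct sum (`⊕`) of coherence spaces. -/
def CohSpace.sum (X Y : CohSpace) : CohSpace where
  web := X.web ⊕ Y.web
  coh := Sum.LiftRel X.coh Y.coh
  refl x := by cases x with
    | inl a => exact Sum.LiftRel.inl (X.refl a)
    | inr b => exact Sum.LiftRel.inr (Y.refl b)
  symm h := by cases h with
    | inl h => exact Sum.LiftRel.inl (X.symm h)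
    | inr h => exact Sum.LiftRel.inr (Y.symm h)

/-- Linear implication `X ⊸ Y := (X ⊗ Y^⊥)^⊥`. -/
def CohSpace.lolly (X Y : CohSpace) : CohSpace := (X.tens Y.dual).dual

/-- The with connective `X & Y := (X^⊥ ⊕ Y^⊥)^⊥`. -/
def CohSpace.withc (X Y : CohSpace) : CohSpace := (X.dual.sum Y.dual).dual

/-- The one-point coherence space (interpretation of `1` and `⊥`). -/
def oneCoh : CohSpace where
  web := PUnit
  coh _ _ := True
  refl _ := trivial
  symm _ := trivial

/-- The empty coherence space (interpretation of `0` and `⊤`). -/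
def topCoh : CohSpace where
  web := Empty
  coh x _ := x.elim
  refl x := x.elim
  symm {x} _ := x.elim

/-- The induced embedding between duals. -/
def CohEmb.dualMap {X Y : CohSpace} (f : X ⟶ Y) : X.dual ⟶ Y.dual where
  toFun := f.toFun
  inj := f.inj
  coh_iff x x' := by
    constructor
    · rintro (rfl | h)
      · exact Or.inl rfl
      · exact Or.inr fun hc => h ((f.coh_iff _ _).2 hc)
    · rintro (h | h)
      · exact Or.inl (f.inj h)
      · exact Or.inr fun hc => h ((f.coh_iff _ _).1 hc)

/-- The induced embedding between tensor products. -/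
def CohEmb.tensMap {X X' Y Y' : CohSpace} (f : X ⟶ X') (g : Y ⟶ Y') :
    X.tens Y ⟶ X'.tens Y' where
  toFun := Prod.map f.toFun g.toFun
  inj := f.inj.prodMap g.inj
  coh_iff p q := and_congr (f.coh_iff _ _) (g.coh_iff _ _)

/-- The induced embedding between direct sums. -/
def CohEmb.sumMap {X X' Y Y' : CohSpace} (f : X ⟶ X') (g : Y ⟶ Y') :
    X.sum Y ⟶ X'.sum Y' where
  toFun := Sum.map f.toFun g.toFun
  inj := f.inj.sumMap g.inj
  coh_iff x x' := by
    constructor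
    · intro h
      cases h with
      | inl h => exact Sum.LiftRel.inl ((f.coh_iff _ _).1 h)
      | inr h => exact Sum.LiftRel.inr ((g.coh_iff _ _).1 h)
    · intro h
      cases x with
      | inl a => cases x' with
        | inl a' => exact Sum.LiftRel.inl ((f.coh_iff _ _).2 (by cases h; assumption))
        | inr b' => exact absurd h (by intro hh; cases hh)
      | inr b => cases x' with
        | inl a' => exact absurd h (by intro hh; cases hh)
        | inr b' => exact Sum.LiftRel.inr ((g.coh_iff _ _).2 (by cases h; assumption))

/-- Linear negation as a covariant endofunctor of `CohI`. -/
def dualFunctor : CohSpace ⥤ CohSpace where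
  obj := CohSpace.dual
  map := CohEmb.dualMap
  map_id _ := rfl
  map_comp _ _ := rfl

/-- Tensor as a functor on the product category. -/
def tensorFunctor : CohSpace × CohSpace ⥤ CohSpace where
  obj p := p.1.tens p.2
  map f := CohEmb.tensMap f.1 f.2
  map_id _ := rfl
  map_comp _ _ := rfl

/-- Sum as a functor on the product category. -/
def sumFunctor : CohSpace × CohSpace ⥤ CohSpace where
  obj p := p.1.sum p.2
  map f := CohEmb.sumMap f.1 f.2
  map_id p := by
    apply CohEmb.ext
    funext x
    cases x <;> rfl
  map_comp f g := by
    apply CohEmb.ext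
    funext x
    cases x <;> rfl

/-- The category `CohI^n`. -/
abbrev CohTuple (n : ℕ) := Fin n → CohSpace

/-- A normal functor: one preserving filtered colimits and finite pullbacks. -/
def IsNormalFunctor {C : Type*} {D : Type*} [Category C] [Category D] (F : C ⥤ D) : Prop :=
  PreservesFilteredColimits F ∧ PreservesLimitsOfShape WalkingCospan F

/-- The web functor `CohI ⥤ Set`. -/
def webF : CohSpace ⥤ Type where
  obj X := X.web
  map f := TypeCat.ofHom f.toFun
  map_id _ := rfl
  map_comp _ _ := rfl

/-- The category of elements of the web presheaf `|F|` of `F : CohI^n ⥤ CohI`. -/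
abbrev Elts {n : ℕ} (F : CohTuple n ⥤ CohSpace) := (F ⋙ webF).Elements

/-- `(X⃗, x)` is a normal form of `F`: its webs are finite and it is initial in its own
slice category of `El(|F|)`. -/
def IsNormalForm {n : ℕ} {F : CohTuple n ⥤ CohSpace} (e : Elts F) : Prop :=
  (∀ i, Finite (e.1 i).web) ∧
    ∀ (f : Elts F) (u : f ⟶ e), ∃! v : e ⟶ f, v ≫ u = 𝟙 e

/-- The pointwise dual functor `F^⊥`. -/
def dualF {n : ℕ} (F : CohTuple n ⥤ CohSpace) : CohTuple n ⥤ CohSpace := F ⋙ dualFunctor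

/-- The pointwise tensor functor `F ⊗ G`. -/
def tensF {n : ℕ} (F G : CohTuple n ⥤ CohSpace) : CohTuple n ⥤ CohSpace :=
  F.prod' G ⋙ tensorFunctor

/-- The pointwise sum functor `F ⊕ G`. -/
def sumF {n : ℕ} (F G : CohTuple n ⥤ CohSpace) : CohTuple n ⥤ CohSpace :=
  F.prod' G ⋙ sumFunctor

/-- The pointwise linear implication functor `F ⊸ G`. -/
def lollyF {n : ℕ} (F G : CohTuple n ⥤ CohSpace) : CohTuple n ⥤ CohSpace :=
  dualF (tensF F (dualF G))

/-- The degree of a normal functor: the supremum of the cardinalities of the webs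
occurring in its normal forms. -/
noncomputable def degree {n : ℕ} (F : CohTuple n ⥤ CohSpace) : ℕ∞ :=
  ⨆ (e : Elts F) (_ : IsNormalForm e) (i : Fin n), (Nat.card (e.1 i).web : ℕ∞)

/-- `F` sends coherence spaces with finite webs to coherence spaces with finite webs. -/
def PreservesFiniteWebs {n : ℕ} (F : CohTuple n ⥤ CohSpace) : Prop :=
  ∀ X : CohTuple n, (∀ i, Finite (X i).web) → Finite (F.obj X).web

/-- A finite normal functor: one preserving finiteness of webs and of finite degree. -/
def IsFiniteFunctor {n : ℕ} (F : CohTuple n ⥤ CohSpace) : Prop :=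
  PreservesFiniteWebs F ∧ degree F < ⊤

/-- `NF(F)`: the set of isomorphism classes of normal forms of `F`. -/
def NFSet {n : ℕ} (F : CohTuple n ⥤ CohSpace) :
    Set (Quotient (isIsomorphicSetoid (Elts F))) :=
  { q | ∃ e : Elts F, IsNormalForm e ∧ Quotient.mk _ e = q }

/-- A uniform family of cliques of `F : CohI^n ⥤ CohI`. -/
def IsUniformFamily {n : ℕ} (F : CohTuple n ⥤ CohSpace)
    (c : ∀ X : CohTuple n, Set (F.obj X).web) : Prop :=
  (∀ X, (F.obj X).IsClique (c X)) ∧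
    ∀ (X Y : CohTuple n) (ι : X ⟶ Y), c X = (F.map ι).toFun ⁻¹' c Y

/-- Coherence of two normal forms: all their instantiations along embeddings into a
common tuple are coherent. -/
def NFCoherent {n : ℕ} {F : CohTuple n ⥤ CohSpace} (e e' : Elts F) : Prop :=
  ∀ (Z : CohTuple n) (ι : e.1 ⟶ Z) (κ : e'.1 ⟶ Z),
    (F.obj Z).coh ((F.map ι).toFun e.2) ((F.map κ).toFun e'.2)

/-- A coherence space structure on a canonical finite web `Fin k`. -/
structure FinCohData where
  k : ℕ
  r : Fin k → Fin k → Prop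
  refl : ∀ i, r i i
  symm : ∀ {i j}, r i j → r j i

/-- The coherence space associated to a `FinCohData`. -/
def FinCohData.toCoh (d : FinCohData) : CohSpace where
  web := Fin d.k
  coh := d.r
  refl := d.refl
  symm := d.symm

/-- A canonical tuple of finite coherence spaces. -/
def canonTuple {n : ℕ} (d : Fin n → FinCohData) : CohTuple n := fun i => (d i).toCoh

/-- Self-coherent normal forms of `F` carried by canonical tuples of finite coherence
spaces; the web of the trace is the set of their isomorphism classes. -/
def CanonNF {n : ℕ} (F : CohTuple n ⥤ CohSpace) : Type :=
  Σ d : Fin n → FinCohData,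
    { x : (F.obj (canonTuple d)).web //
        IsNormalForm (F := F) ⟨canonTuple d, x⟩ ∧
          NFCoherent (F := F) ⟨canonTuple d, x⟩ ⟨canonTuple d, x⟩ }

/-- The element of `El(|F|)` carried by a canonical normal form. -/
def CanonNF.toElts {n : ℕ} {F : CohTuple n ⥤ CohSpace} (c : CanonNF F) : Elts F :=
  ⟨canonTuple c.1, c.2.1⟩

/-- Canonical normal forms are identified when isomorphic in `El(|F|)`. -/
def traceSetoid {n : ℕ} (F : CohTuple n ⥤ CohSpace) : Setoid (CanonNF F) :=
  (isIsomorphicSetoid (Elts F)).comap CanonNF.toElts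

/-- The trace `Tr(F)`: isomorphism classes of self-coherent normal forms, with the
coherence relation between normal forms. -/
def Tr {n : ℕ} (F : CohTuple n ⥤ CohSpace) : CohSpace where
  web := Quotient (traceSetoid F)
  coh q q' := ∃ c c' : CanonNF F,
    Quotient.mk (traceSetoid F) c = q ∧ Quotient.mk (traceSetoid F) c' = q' ∧
      NFCoherent c.toElts c'.toElts
  refl q := by
    obtain ⟨c, rfl⟩ := Quotient.exists_rep q
    exact ⟨c, c, rfl, rfl, c.2.2.2⟩
  symm h := by
    obtain ⟨c, c', h1, h2, h3⟩ := h
    exact ⟨c', c, h2, h1, fun Z ι κ => (F.obj Z).symm (h3 Z κ ι)⟩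

/-- The family of functors whose pointwise pairing computes `Z ↦ (X₁,…,Xₙ,Z)`. -/
def gfam {n : ℕ} (X : CohTuple n) (i : Fin (n + 1)) : CohTuple 1 ⥤ CohSpace :=
  if h : (i : ℕ) < n then (Functor.const (CohTuple 1)).obj (X ⟨i, h⟩)
  else Pi.eval (fun _ : Fin 1 => CohSpace) 0

/-- The partial application `F(X₁,…,Xₙ,−)` of `F : CohI^(n+1) ⥤ CohI`. -/
def partialApp {n : ℕ} (F : CohTuple (n + 1) ⥤ CohSpace) (X : CohTuple n) :
    CohTuple 1 ⥤ CohSpace :=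
  Functor.pi' (gfam X) ⋙ F

/-- The embedding `(X⃗, Z) ↪ (Y⃗, Z)` induced componentwise by `ι : X⃗ ↪ Y⃗`. -/
def extHom {n : ℕ} {X Y : CohTuple n} (ι : X ⟶ Y) (Z : CohTuple 1) (i : Fin (n + 1)) :
    (gfam X i).obj Z ⟶ (gfam Y i).obj Z := by
  by_cases h : (i : ℕ) < n
  · simp only [gfam, dif_pos h]
    exact ι ⟨i, h⟩
  · simp only [gfam, dif_neg h]
    exact 𝟙 (Z 0)

/-- The embedding `extHom` as a morphism in `CohI^(n+1)`. -/
def extHomPi {n : ℕ} {X Y : CohTuple n} (ι : X ⟶ Y) (Z : CohTuple 1) :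
    (Functor.pi' (gfam X)).obj Z ⟶ (Functor.pi' (gfam Y)).obj Z :=
  fun i => extHom ι Z i

/-- Transport along an object equality `G.obj X = Tr (partialApp F X)`. -/
def trWebCast {n : ℕ} {F : CohTuple (n + 1) ⥤ CohSpace} {G : CohTuple n ⥤ CohSpace}
    (h : ∀ X, G.obj X = Tr (partialApp F X)) (X : CohTuple n) :
    (Tr (partialApp F X)).web → (G.obj X).web :=
  fun q => cast (congrArg CohSpace.web (h X)).symm q

/-- `G` acts on embeddings the way `∀(F)` does: normal forms are transported by
keeping the bound variables and substituting along `ι` on the free ones. -/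
def ForallAction {n : ℕ} (F : CohTuple (n + 1) ⥤ CohSpace) (G : CohTuple n ⥤ CohSpace)
    (hobj : ∀ X, G.obj X = Tr (partialApp F X)) : Prop :=
  ∀ (X Y : CohTuple n) (ι : X ⟶ Y) (c : CanonNF (partialApp F X)),
    ∃ c' : CanonNF (partialApp F Y),
      (G.map ι).toFun (trWebCast hobj X (Quotient.mk (traceSetoid _) c))
          = trWebCast hobj Y (Quotient.mk (traceSetoid _) c') ∧
        c'.1 = c.1 ∧
        HEq c'.2.1 ((F.map (extHomPi ι (canonTuple c.1))).toFun c.2.1)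

/-- `G` is (a presentation of) the functor `∀(F)`. -/
def IsForallExtension {n : ℕ} (F : CohTuple (n + 1) ⥤ CohSpace)
    (G : CohTuple n ⥤ CohSpace) : Prop :=
  ∃ hobj : ∀ X, G.obj X = Tr (partialApp F X), ForallAction F G hobj

/-- The uniform family of cliques obtained by instantiating a clique of the trace. -/
def instFam {n : ℕ} (F : CohTuple n ⥤ CohSpace) (c : Set (Tr F).web) :
    ∀ X : CohTuple n, Set (F.obj X).web := fun X =>
  { x | ∃ (d : CanonNF F) (ι : canonTuple d.1 ⟶ X),
      Quotient.mk (traceSetoid F) d ∈ c ∧ (F.map ι).toFun d.2.1 = x }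


/-! ### Auxiliary material for Statement 5 -/

section Stmt5Aux

open CategoryTheory Limits

variable {n : ℕ}

lemma CohEmb.comp_toFun {X Y Z : CohSpace} (f : X ⟶ Y) (g : Y ⟶ Z) (x : X.web) :
    (f ≫ g).toFun x = g.toFun (f.toFun x) := rfl

lemma map_comp_apply (F : CohTuple n ⥤ CohSpace) {X Y Z : CohTuple n} (f : X ⟶ Y) (g : Y ⟶ Z)
    (x : (F.obj X).web) :
    (F.map (f ≫ g)).toFun x = (F.map g).toFun ((F.map f).toFun x) := by
  rw [F.map_comp]; rfl

lemma map_id_apply (F : CohTuple n ⥤ CohSpace) (X : CohTuple n) (x : (F.obj X).web) :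
    (F.map (𝟙 X)).toFun x = x := by rw [F.map_id]; rfl

/-- The embedding of the one-point space picking out a point. -/
def ptEmb {X : CohSpace} (x : X.web) : oneCoh ⟶ X where
  toFun _ := x
  inj _ _ _ := Subsingleton.elim (α := PUnit) _ _
  coh_iff _ _ := ⟨fun _ => X.refl x, fun _ => trivial⟩

/-- Pullback of two embeddings of coherence spaces. -/
def pbCoh {X Y Z : CohSpace} (f : X ⟶ Z) (g : Y ⟶ Z) : CohSpace where
  web := { p : X.web × Y.web // f.toFun p.1 = g.toFun p.2 }
  coh p q := X.coh p.1.1 q.1.1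
  refl p := X.refl _
  symm h := X.symm h

def pbFst {X Y Z : CohSpace} (f : X ⟶ Z) (g : Y ⟶ Z) : pbCoh f g ⟶ X where
  toFun p := p.1.1
  inj p q h := by
    have h1 : (p.1).1 = (q.1).1 := h
    have h2 : (p.1).2 = (q.1).2 := g.inj (by rw [← p.2, ← q.2, h1])
    exact Subtype.ext (Prod.ext h1 h2)
  coh_iff _ _ := Iff.rfl

def pbSnd {X Y Z : CohSpace} (f : X ⟶ Z) (g : Y ⟶ Z) : pbCoh f g ⟶ Y where
  toFun p := p.1.2
  inj p q h := by
    have h2 : (p.1).2 = (q.1).2 := h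
    have h1 : (p.1).1 = (q.1).1 := f.inj (by rw [p.2, q.2, h2])
    exact Subtype.ext (Prod.ext h1 h2)
  coh_iff p q := by
    show X.coh p.1.1 q.1.1 ↔ _
    rw [f.coh_iff p.1.1 q.1.1, p.2, q.2, ← g.coh_iff]

/-- Componentwise pullback in `CohI^n`. -/
def pbT {X Y Z : CohTuple n} (ι : X ⟶ Z) (κ : Y ⟶ Z) : CohTuple n :=
  fun i => pbCoh (ι i) (κ i)

def pbTFst {X Y Z : CohTuple n} (ι : X ⟶ Z) (κ : Y ⟶ Z) : pbT ι κ ⟶ X :=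
  fun i => pbFst (ι i) (κ i)

def pbTSnd {X Y Z : CohTuple n} (ι : X ⟶ Z) (κ : Y ⟶ Z) : pbT ι κ ⟶ Y :=
  fun i => pbSnd (ι i) (κ i)

lemma pbT_comm {X Y Z : CohTuple n} (ι : X ⟶ Z) (κ : Y ⟶ Z) :
    pbTFst ι κ ≫ ι = pbTSnd ι κ ≫ κ := by
  funext i; apply CohEmb.ext; funext p; exact p.2

def pbTIsLimit {X Y Z : CohTuple n} (ι : X ⟶ Z) (κ : Y ⟶ Z) :
    IsLimit (PullbackCone.mk (pbTFst ι κ) (pbTSnd ι κ) (pbT_comm ι κ)) :=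
  PullbackCone.IsLimit.mk (pbT_comm ι κ)
    (fun s i =>
      { toFun := fun a => ⟨((s.fst i).toFun a, (s.snd i).toFun a),
          congrFun (congrArg CohEmb.toFun (congrFun s.condition i)) a⟩
        inj := fun a b h => (s.fst i).inj (congrArg (fun q => q.1.1) h)
        coh_iff := fun a b => (s.fst i).coh_iff a b })
    (fun s => by funext i; apply CohEmb.ext; rfl)
    (fun s => by funext i; apply CohEmb.ext; rfl)
    (fun s m h1 h2 => by
      funext i; apply CohEmb.ext; funext a
      apply Subtype.ext
      apply Prod.ext
      · exact congrFun (congrArg CohEmb.toFun (congrFun h1 i)) a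
      · exact congrFun (congrArg CohEmb.toFun (congrFun h2 i)) a)

lemma exists_pb_lift (F : CohTuple n ⥤ CohSpace)
    [PreservesLimitsOfShape WalkingCospan F]
    {X Y Z : CohTuple n} (ι : X ⟶ Z) (κ : Y ⟶ Z)
    (x : (F.obj X).web) (y : (F.obj Y).web)
    (h : (F.map ι).toFun x = (F.map κ).toFun y) :
    ∃ (P : CohTuple n) (p : (F.obj P).web) (f : P ⟶ X) (g : P ⟶ Y),
      (F.map f).toFun p = x ∧ (F.map g).toFun p = y := by
  have t := isLimitPullbackConeMapOfIsLimit F (pbT_comm ι κ) (pbTIsLimit ι κ)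
  have hcomm : ptEmb x ≫ F.map ι = ptEmb y ≫ F.map κ := by
    apply CohEmb.ext; funext u; exact h
  let s : PullbackCone (F.map ι) (F.map κ) := PullbackCone.mk (ptEmb x) (ptEmb y) hcomm
  refine ⟨pbT ι κ, (t.lift s).toFun PUnit.unit, pbTFst ι κ, pbTSnd ι κ, ?_, ?_⟩
  · have := t.fac s WalkingCospan.left
    exact congrFun (congrArg CohEmb.toFun this) PUnit.unit
  · have := t.fac s WalkingCospan.right
    exact congrFun (congrArg CohEmb.toFun this) PUnit.unit

/-- Subspace of a coherence space on a subset of the web. -/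
def CohSpace.sub (X : CohSpace) (s : Set X.web) : CohSpace where
  web := s
  coh a b := X.coh a.1 b.1
  refl a := X.refl _
  symm h := X.symm h

def CohSpace.subIncl (X : CohSpace) (s : Set X.web) : X.sub s ⟶ X where
  toFun := Subtype.val
  inj _ _ := Subtype.ext
  coh_iff _ _ := Iff.rfl

/-- For any colimit cocone in `CohI`, the legs are jointly surjective on webs. -/
lemma cocone_jointly_surjective {J : Type*} [Category J] {K : J ⥤ CohSpace}
    {c : Cocone K} (t : IsColimit c) (p : c.pt.web) :
    ∃ (j : J) (y : (K.obj j).web), (c.ι.app j).toFun y = p := by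
  let s : Set c.pt.web := {q | ∃ j y, (c.ι.app j).toFun y = q}
  let c' : Cocone K :=
    { pt := c.pt.sub s
      ι :=
        { app := fun j =>
            { toFun := fun y => ⟨(c.ι.app j).toFun y, ⟨j, y, rfl⟩⟩
              inj := fun a b hab => (c.ι.app j).inj (congrArg Subtype.val hab)
              coh_iff := fun a b => (c.ι.app j).coh_iff a b }
          naturality := fun j j' f => by
            apply CohEmb.ext; funext y; apply Subtype.ext
            exact congrFun (congrArg CohEmb.toFun (c.w f)) y } }
  have hid : t.desc c' ≫ c.pt.subIncl s = 𝟙 c.pt := by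
    apply t.hom_ext
    intro j
    calc c.ι.app j ≫ t.desc c' ≫ c.pt.subIncl s
        = (c.ι.app j ≫ t.desc c') ≫ c.pt.subIncl s := by rw [Category.assoc]
      _ = c'.ι.app j ≫ c.pt.subIncl s := by rw [t.fac]
      _ = c.ι.app j := by apply CohEmb.ext; rfl
      _ = c.ι.app j ≫ 𝟙 c.pt := (Category.comp_id _).symm
  have hp := congrFun (congrArg CohEmb.toFun hid) p
  obtain ⟨j, y, hy⟩ := ((t.desc c').toFun p).2
  exact ⟨j, y, hy.trans hp⟩

/-- Index preorder of finite "subtuples". -/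
abbrev FinSub (X : CohTuple n) := { S : ∀ i, Set ((X i).web) // ∀ i, (S i).Finite }

instance (X : CohTuple n) : Nonempty (FinSub X) :=
  ⟨⟨fun _ => ∅, fun _ => Set.finite_empty⟩⟩

def FinSub.union {X : CohTuple n} (S T : FinSub X) : FinSub X :=
  ⟨fun i => S.1 i ∪ T.1 i, fun i => (S.2 i).union (T.2 i)⟩

lemma FinSub.le_union_left {X : CohTuple n} (S T : FinSub X) : S ≤ S.union T :=
  fun _ _ hb => Or.inl hb

lemma FinSub.le_union_right {X : CohTuple n} (S T : FinSub X) : T ≤ S.union T :=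
  fun _ _ hb => Or.inr hb

instance (X : CohTuple n) : IsDirected (FinSub X) (· ≤ ·) :=
  ⟨fun S T => ⟨S.union T, FinSub.le_union_left S T, FinSub.le_union_right S T⟩⟩

/-- The filtered diagram of finite subtuples of `X`. -/
def finSubDiagram (X : CohTuple n) : FinSub X ⥤ CohTuple n where
  obj S := fun i => (X i).sub (S.1 i)
  map {S T} h := fun i =>
    { toFun := fun a => ⟨a.1, leOfHom h i a.2⟩
      inj := fun a b hab => by
        have h' := congrArg Subtype.val hab
        exact Subtype.ext h'
      coh_iff := fun _ _ => Iff.rfl }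
  map_id S := by funext i; apply CohEmb.ext; rfl
  map_comp f g := by funext i; apply CohEmb.ext; rfl

def finSubCocone (X : CohTuple n) : Cocone (finSubDiagram X) where
  pt := X
  ι :=
    { app := fun S => fun i => (X i).subIncl (S.1 i)
      naturality := fun S T h => by funext i; apply CohEmb.ext; rfl }

def singleTup (X : CohTuple n) (i : Fin n) (a : (X i).web) : FinSub X :=
  ⟨fun j => {b | ∃ h : i = j, h ▸ a = b}, by
    intro j
    apply Set.Subsingleton.finite
    rintro b ⟨rfl, rfl⟩ b' ⟨h', hb'⟩
    exact hb'⟩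

lemma mem_singleTup (X : CohTuple n) (i : Fin n) (a : (X i).web) :
    a ∈ (singleTup X i a).1 i := ⟨rfl, rfl⟩

lemma singleTup_le (X : CohTuple n) {S : FinSub X} {i : Fin n} {a : (X i).web}
    (ha : a ∈ S.1 i) : singleTup X i a ≤ S := by
  rintro j b ⟨rfl, rfl⟩
  exact ha

lemma cocone_compat (X : CohTuple n) (s : Cocone (finSubDiagram X)) {S T : FinSub X}
    (hST : S ≤ T) (i : Fin n) (a : (X i).web) (ha : a ∈ S.1 i) :
    (s.ι.app S i).toFun ⟨a, ha⟩ = (s.ι.app T i).toFun ⟨a, hST i ha⟩ := by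
  have h := s.w (homOfLE hST)
  exact (congrFun (congrArg CohEmb.toFun (congrFun h i)) ⟨a, ha⟩).symm

lemma cocone_compat₂ (X : CohTuple n) (s : Cocone (finSubDiagram X)) {S T : FinSub X}
    (i : Fin n) (a : (X i).web) (haS : a ∈ S.1 i) (haT : a ∈ T.1 i) :
    (s.ι.app S i).toFun ⟨a, haS⟩ = (s.ι.app T i).toFun ⟨a, haT⟩ := by
  rw [cocone_compat X s (FinSub.le_union_left S T) i a haS,
    cocone_compat X s (FinSub.le_union_right S T) i a haT]

def finSubIsColimit (X : CohTuple n) : IsColimit (finSubCocone X) where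
  desc s := fun i =>
    { toFun := fun a => (s.ι.app (singleTup X i a) i).toFun ⟨a, mem_singleTup X i a⟩
      inj := fun a b hab => by
        have ha : a ∈ ((singleTup X i a).union (singleTup X i b)).1 i :=
          Or.inl (mem_singleTup X i a)
        have hb : b ∈ ((singleTup X i a).union (singleTup X i b)).1 i :=
          Or.inr (mem_singleTup X i b)
        have hab' : (s.ι.app (singleTup X i a) i).toFun ⟨a, mem_singleTup X i a⟩ =
            (s.ι.app (singleTup X i b) i).toFun ⟨b, mem_singleTup X i b⟩ := hab
        rw [cocone_compat₂ X s i a (mem_singleTup X i a) ha,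
          cocone_compat₂ X s i b (mem_singleTup X i b) hb] at hab'
        exact congrArg Subtype.val
          ((s.ι.app ((singleTup X i a).union (singleTup X i b)) i).inj hab')
      coh_iff := fun a b => by
        have ha : a ∈ ((singleTup X i a).union (singleTup X i b)).1 i :=
          Or.inl (mem_singleTup X i a)
        have hb : b ∈ ((singleTup X i a).union (singleTup X i b)).1 i :=
          Or.inr (mem_singleTup X i b)
        show (X i).coh a b ↔
          (s.pt i).coh ((s.ι.app (singleTup X i a) i).toFun ⟨a, mem_singleTup X i a⟩)
            ((s.ι.app (singleTup X i b) i).toFun ⟨b, mem_singleTup X i b⟩)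
        rw [cocone_compat₂ X s i a (mem_singleTup X i a) ha,
          cocone_compat₂ X s i b (mem_singleTup X i b) hb]
        exact (s.ι.app ((singleTup X i a).union (singleTup X i b)) i).coh_iff ⟨a, ha⟩ ⟨b, hb⟩ }
  fac s S := by
    funext i; apply CohEmb.ext; funext a
    exact cocone_compat X s (singleTup_le X a.2) i a.1 (mem_singleTup X i a.1)
  uniq s m hm := by
    funext i; apply CohEmb.ext; funext a
    exact congrFun (congrArg CohEmb.toFun (congrFun (hm (singleTup X i a)) i))
      ⟨a, mem_singleTup X i a⟩

lemma exists_finite_factor (F : CohTuple n ⥤ CohSpace)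
    [PreservesFilteredColimitsOfSize.{0, 0} F]
    (X : CohTuple n) (x : (F.obj X).web) :
    ∃ (W : CohTuple n) (j : W ⟶ X) (w : (F.obj W).web),
      (∀ i, Finite ((W i).web)) ∧ (F.map j).toFun w = x := by
  have t := isColimitOfPreserves F (finSubIsColimit X)
  obtain ⟨S, y, hy⟩ := cocone_jointly_surjective t x
  exact ⟨fun i => (X i).sub (S.1 i), fun i => (X i).subIncl (S.1 i), y,
    fun i => (S.2 i).to_subtype, hy⟩

lemma exists_normalForm_over (F : CohTuple n ⥤ CohSpace)
    [PreservesFilteredColimitsOfSize.{0, 0} F]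
    (X : CohTuple n) (x : (F.obj X).web) :
    ∃ (W : CohTuple n) (w : (F.obj W).web) (j : W ⟶ X),
      (F.map j).toFun w = x ∧ (∀ i, Finite ((W i).web)) ∧
        IsNormalForm (F := F) ⟨W, w⟩ := by
  classical
  let T : Set ℕ := {k | ∃ (W : CohTuple n) (w : (F.obj W).web) (j : W ⟶ X),
      (∀ i, Finite ((W i).web)) ∧ (F.map j).toFun w = x ∧
        (∑ i, Nat.card ((W i).web)) = k}
  have hT : T.Nonempty := by
    obtain ⟨W, j, w, hfin, hw⟩ := exists_finite_factor F X x
    exact ⟨_, W, w, j, hfin, hw, rfl⟩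
  obtain ⟨W, w, j, hfin, hw, hsum⟩ := Nat.sInf_mem hT
  refine ⟨W, w, j, hw, hfin, hfin, ?_⟩
  intro f u
  have hffin : ∀ i, Finite ((f.1 i).web) := fun i => by
    haveI := hfin i
    exact Finite.of_injective _ (u.val i).inj
  have hle : ∀ i, Nat.card ((f.1 i).web) ≤ Nat.card ((W i).web) := fun i => by
    haveI := hfin i
    exact Nat.card_le_card_of_injective _ (u.val i).inj
  have hmem : (∑ i, Nat.card ((f.1 i).web)) ∈ T := by
    refine ⟨f.1, f.2, u.val ≫ j, hffin, ?_, rfl⟩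
    erw [map_comp_apply, show (F.map u.val).toFun f.2 = w from u.2]
    exact hw
  have hge : (∑ i, Nat.card ((W i).web)) ≤ ∑ i, Nat.card ((f.1 i).web) := by
    rw [hsum]; exact Nat.sInf_le hmem
  have hsumeq : (∑ i, Nat.card ((f.1 i).web)) = ∑ i, Nat.card ((W i).web) :=
    le_antisymm (Finset.sum_le_sum (fun i _ => hle i)) hge
  have hcardeq : ∀ i, Nat.card ((f.1 i).web) = Nat.card ((W i).web) := by
    have := (Finset.sum_eq_sum_iff_of_le (fun i _ => hle i)).1 hsumeq
    exact fun i => this i (Finset.mem_univ i)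
  have hbij : ∀ i, Function.Bijective (u.val i).toFun := fun i => by
    haveI := hfin i; haveI := hffin i
    exact (Nat.bijective_iff_injective_and_card _).2 ⟨(u.val i).inj, hcardeq i⟩
  let e : ∀ i, (f.1 i).web ≃ (W i).web := fun i => Equiv.ofBijective _ (hbij i)
  let v : W ⟶ f.1 := fun i =>
    { toFun := (e i).symm
      inj := (e i).symm.injective
      coh_iff := fun a b => by
        have h := ((u.val i).coh_iff ((e i).symm a) ((e i).symm b)).symm
        rwa [show (u.val i).toFun ((e i).symm a) = a from (e i).apply_symm_apply a,
          show (u.val i).toFun ((e i).symm b) = b from (e i).apply_symm_apply b] at h }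
  have huv : u.val ≫ v = 𝟙 f.1 := by
    funext i; apply CohEmb.ext; funext a
    exact (e i).symm_apply_apply a
  have hvu : v ≫ u.val = 𝟙 W := by
    funext i; apply CohEmb.ext; funext a
    exact (e i).apply_symm_apply a
  have hvElts : (F.map v).toFun w = f.2 := by
    have h2 : (F.map v).toFun ((F.map u.val).toFun f.2) = f.2 := by
      erw [← map_comp_apply, huv, map_id_apply]
    rwa [show (F.map u.val).toFun f.2 = w from u.2] at h2
  refine ⟨⟨v, hvElts⟩, Subtype.ext hvu, ?_⟩
  rintro v' hv'
  apply Subtype.ext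
  have h := congrArg Subtype.val hv'
  funext i; apply CohEmb.ext; funext a
  apply (u.val i).inj
  have h3 := congrFun (congrArg CohEmb.toFun (congrFun h i)) a
  rw [show (u.val i).toFun ((v'.val i).toFun a) = a from h3]
  exact ((e i).apply_symm_apply a).symm

lemma isNormalForm_transport {F : CohTuple n ⥤ CohSpace} {e e' : Elts F}
    (α : e ⟶ e') (β : e' ⟶ e) (hαβ : α ≫ β = 𝟙 e) (hβα : β ≫ α = 𝟙 e')
    (hfin : ∀ i, Finite ((e'.1 i).web)) (hnf : IsNormalForm e) : IsNormalForm e' := by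
  refine ⟨hfin, fun f u => ?_⟩
  obtain ⟨v, hv, hvuniq⟩ := hnf.2 f (u ≫ β)
  refine ⟨β ≫ v, ?_, ?_⟩
  · show (β ≫ v) ≫ u = 𝟙 e'
    have h4 : (β ≫ v) ≫ u = β ≫ (v ≫ u ≫ β) ≫ α := by
      simp only [Category.assoc, hβα, Category.comp_id]
    rw [h4, hv, Category.id_comp, hβα]
  · intro w' hw'
    show w' = β ≫ v
    have hw'' : w' ≫ u = 𝟙 e' := hw'
    have h1 : (α ≫ w') ≫ u ≫ β = 𝟙 e := by
      have h5 : w' ≫ u ≫ β = β := by rw [← Category.assoc, hw'', Category.id_comp]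
      rw [Category.assoc, h5, hαβ]
    have h2 := hvuniq (α ≫ w') h1
    rw [← h2, ← Category.assoc, hβα, Category.id_comp]

lemma exists_canon (W : CohTuple n) (hfin : ∀ i, Finite ((W i).web)) :
    ∃ (d : Fin n → FinCohData) (φ : canonTuple d ⟶ W) (ψ : W ⟶ canonTuple d),
      φ ≫ ψ = 𝟙 (canonTuple d) ∧ ψ ≫ φ = 𝟙 W := by
  have he : ∀ i, ∃ k, Nonempty ((W i).web ≃ Fin k) := fun i => by
    haveI := hfin i
    exact Finite.exists_equiv_fin _
  choose k hk using he
  have e : ∀ i, (W i).web ≃ Fin (k i) := fun i => (hk i).some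
  refine ⟨fun i => ⟨k i, fun a b => (W i).coh ((e i).symm a) ((e i).symm b),
      fun a => (W i).refl _, fun h => (W i).symm h⟩,
    fun i => ⟨(e i).symm, (e i).symm.injective, fun a b => Iff.rfl⟩,
    fun i => ⟨e i, (e i).injective, fun a b => by
      show (W i).coh a b ↔ (W i).coh ((e i).symm ((e i) a)) ((e i).symm ((e i) b))
      rw [(e i).symm_apply_apply, (e i).symm_apply_apply]⟩, ?_, ?_⟩
  · funext i; apply CohEmb.ext; funext a
    exact (e i).apply_symm_apply a
  · funext i; apply CohEmb.ext; funext a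
    exact (e i).symm_apply_apply a

end Stmt5Aux

-- STATEMENT 5
theorem stmt5 {n : ℕ} (F : CohTuple n ⥤ CohSpace) (hF : IsNormalFunctor F) :
    Set.BijOn (instFam F) { c | (Tr F).IsClique c } { c | IsUniformFamily F c } := by
  obtain ⟨hF1, hF2⟩ := hF
  haveI := hF1
  haveI := hF2
  refine ⟨?_, ?_, ?_⟩
  · -- MapsTo
    intro c hc
    refine ⟨?_, ?_⟩
    · -- each member of the family is a clique
      intro X x hx x' hx'
      obtain ⟨d, ι, hd, rfl⟩ := hx
      obtain ⟨d', κ, hd', rfl⟩ := hx'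
      obtain ⟨e, e', he, he', hco⟩ := hc hd hd'
      have hrel : Nonempty (e.toElts ≅ d.toElts) := Quotient.exact he
      have hrel' : Nonempty (e'.toElts ≅ d'.toElts) := Quotient.exact he'
      obtain ⟨φ⟩ := hrel
      obtain ⟨φ'⟩ := hrel'
      have h1 : (F.map (φ.hom.val ≫ ι)).toFun e.toElts.2 = (F.map ι).toFun d.2.1 := by
        erw [map_comp_apply]
        exact congrArg _ φ.hom.2
      have h2 : (F.map (φ'.hom.val ≫ κ)).toFun e'.toElts.2 = (F.map κ).toFun d'.2.1 := by
        erw [map_comp_apply]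
        exact congrArg _ φ'.hom.2
      have h3 := hco X (φ.hom.val ≫ ι) (φ'.hom.val ≫ κ)
      rwa [h1, h2] at h3
    · -- uniformity
      intro X Y ι
      ext x
      constructor
      · rintro ⟨d, κ, hd, rfl⟩
        exact ⟨d, κ ≫ ι, hd, map_comp_apply F κ ι d.2.1⟩
      · rintro ⟨d, κ, hd, hκ⟩
        obtain ⟨P, p, f, g, hf, hg⟩ := exists_pb_lift F ι κ x d.2.1 hκ.symm
        obtain ⟨v, hv, -⟩ := d.2.2.1.2 ⟨P, p⟩ ⟨g, hg⟩
        refine ⟨d, v.val ≫ f, hd, ?_⟩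
        rw [map_comp_apply, show (F.map v.val).toFun d.2.1 = p from v.2]
        exact hf
  · -- InjOn
    have key : ∀ c₁ ∈ { c | (Tr F).IsClique c }, ∀ c₂ ∈ { c | (Tr F).IsClique c },
        instFam F c₁ = instFam F c₂ → c₁ ⊆ c₂ := by
      intro c₁ _ c₂ _ heq q hq
      obtain ⟨d, rfl⟩ := Quotient.exists_rep q
      have hd : d.2.1 ∈ instFam F c₁ (canonTuple d.1) :=
        ⟨d, 𝟙 _, hq, map_id_apply F _ _⟩
      rw [heq] at hd
      obtain ⟨d', κ, hd', hκ⟩ := hd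
      have κE : d'.toElts ⟶ (⟨canonTuple d.1, d.2.1⟩ : Elts F) := ⟨κ, hκ⟩
      obtain ⟨v, hv, -⟩ := d.2.2.1.2 d'.toElts κE
      obtain ⟨w2, hw2, -⟩ : ∃! w2 : d'.toElts ⟶ (⟨canonTuple d.1, d.2.1⟩ : Elts F),
          w2 ≫ v = 𝟙 d'.toElts := d'.2.2.1.2 (⟨canonTuple d.1, d.2.1⟩ : Elts F) v
      have hκw : κE = w2 := by
        calc κE = (w2 ≫ v) ≫ κE := by erw [hw2, Category.id_comp]
          _ = w2 ≫ (v ≫ κE) := Category.assoc _ _ _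
          _ = w2 := by erw [hv, Category.comp_id]
      have hiso : (traceSetoid F).r d d' :=
        ⟨⟨v, κE, hv, by rw [hκw]; exact hw2⟩⟩
      rwa [show Quotient.mk (traceSetoid F) d = Quotient.mk (traceSetoid F) d' from
        Quotient.sound hiso]
    intro c₁ h₁ c₂ h₂ heq
    exact Set.Subset.antisymm (key c₁ h₁ c₂ h₂ heq) (key c₂ h₂ c₁ h₁ heq.symm)
  · -- SurjOn
    intro u hu
    obtain ⟨hclique, hunif⟩ := hu
    set c : Set (Tr F).web :=
      {q | ∃ d : CanonNF F, Quotient.mk (traceSetoid F) d = q ∧ d.2.1 ∈ u (canonTuple d.1)}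
      with hcdef
    have hmemu : ∀ (d : CanonNF F), d.2.1 ∈ u (canonTuple d.1) →
        ∀ (Z : CohTuple n) (ιz : canonTuple d.1 ⟶ Z), (F.map ιz).toFun d.2.1 ∈ u Z := by
      intro d hdu Z ιz
      have h := hdu
      rw [hunif (canonTuple d.1) Z ιz] at h
      exact h
    refine ⟨c, ?_, ?_⟩
    · -- c is a clique of the trace
      intro q hq q' hq'
      obtain ⟨d, rfl, hdu⟩ := hq
      obtain ⟨d', rfl, hd'u⟩ := hq'
      exact ⟨d, d', rfl, rfl, fun Z ιz κz =>
        hclique Z (hmemu d hdu Z ιz) (hmemu d' hd'u Z κz)⟩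
    · -- instFam F c = u
      funext X
      ext x
      constructor
      · rintro ⟨d, ι, hd, rfl⟩
        obtain ⟨d₀, hmk, hd₀u⟩ := hd
        have hrel : Nonempty (d₀.toElts ≅ d.toElts) := Quotient.exact hmk
        obtain ⟨φ⟩ := hrel
        have hdu : d.2.1 ∈ u (canonTuple d.1) := by
          have h := hmemu d₀ hd₀u (canonTuple d.1) φ.hom.val
          erw [show (F.map φ.hom.val).toFun d₀.2.1 = d.2.1 from φ.hom.2] at h; exact h
        exact hmemu d hdu X ι
      · intro hx
        obtain ⟨W, w, j, hj, hfin, hnf⟩ := exists_normalForm_over F X x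
        obtain ⟨d, φ, ψ, hφψ, hψφ⟩ := exists_canon W hfin
        set x₀ : (F.obj (canonTuple d)).web := (F.map ψ).toFun w with hx₀
        have hβ : (F.map φ).toFun x₀ = w := by
          rw [hx₀, ← map_comp_apply, hψφ, map_id_apply]
        have hnf' : IsNormalForm (F := F) ⟨canonTuple d, x₀⟩ := by
          refine isNormalForm_transport (F := F) (e := ⟨W, w⟩) (e' := ⟨canonTuple d, x₀⟩)
            ⟨ψ, hx₀.symm⟩ ⟨φ, hβ⟩ (Subtype.ext hψφ) (Subtype.ext hφψ) ?_ hnf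
          intro i
          exact inferInstanceAs (Finite (Fin (d i).k))
        have hwu : w ∈ u W := by
          rw [hunif W X j]
          show (F.map j).toFun w ∈ u X
          rwa [hj]
        have hx₀u : x₀ ∈ u (canonTuple d) := by
          have h := hwu
          rw [hunif W (canonTuple d) ψ] at h
          exact h
        have hself : NFCoherent (F := F) ⟨canonTuple d, x₀⟩ ⟨canonTuple d, x₀⟩ := by
          intro Z ιz κz
          refine hclique Z ?_ ?_
          · have h := hx₀u; rwa [hunif (canonTuple d) Z ιz] at h
          · have h := hx₀u; rwa [hunif (canonTuple d) Z κz] at h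
        refine ⟨⟨d, ⟨x₀, hnf', hself⟩⟩, φ ≫ j, ⟨⟨d, ⟨x₀, hnf', hself⟩⟩, rfl, hx₀u⟩, ?_⟩
        show (F.map (φ ≫ j)).toFun x₀ = x
        rw [map_comp_apply, hβ]
        exact hj
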